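/- For a, b, c > 0 with d := min over [0,π/2] of (a·sin t + b·cos t − c·sin t·cos t) satisfying d ≥ 0, one has c·d ≤ a·b, with equality only if c = √(a²+b²) and d = ab/√(a²+b²). -/
import Mathlib


open Set Real

theorem stmt10 (a b c d : ℝ) (ha : 0 < a) (hb : 0 < b) (hc : 0 < c)
    (hd : IsLeast ((fun t : ℝ => a * Real.sin t + b * Real.cos t - c * Real.sin t * Real.cos t) ''
      Icc 0 (π / 2)) d)
    (hd0 : 0 ≤ d) :
    c * d ≤ a * b ∧
    (c * d = a * b → c = Real.sqrt (a ^ 2 + b ^ 2) ∧ d = a * b / Real.sqrt (a ^ 2 + b ^ 2)) := by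
  set s := Real.sqrt (a ^ 2 + b ^ 2) with hs
  have hs2 : s ^ 2 = a ^ 2 + b ^ 2 := Real.sq_sqrt (by positivity)
  have hspos : 0 < s := Real.sqrt_pos.mpr (by positivity)
  have hbs : b / s ≤ 1 := by
    rw [div_le_one hspos]; nlinarith [sq_nonneg a]
  have hbs0 : (0 : ℝ) ≤ b / s := by positivity
  set t0 := Real.arcsin (b / s) with ht0
  have hsin : Real.sin t0 = b / s := Real.sin_arcsin (by linarith) hbs
  have hcos : Real.cos t0 = a / s := by
    rw [ht0, Real.cos_arcsin,
      show (1 : ℝ) - (b / s) ^ 2 = (a / s) ^ 2 by field_simp; nlinarith]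
    exact Real.sqrt_sq (by positivity)
  have hmem : t0 ∈ Icc 0 (π / 2) :=
    ⟨Real.arcsin_nonneg.mpr hbs0, Real.arcsin_le_pi_div_two _⟩
  have hdle : d ≤ a * (b / s) + b * (a / s) - c * (b / s) * (a / s) := by
    have := hd.2 ⟨t0, hmem, rfl⟩
    simp only [hsin, hcos] at this
    linarith
  have h1 : c * d ≤ c * (a * (b / s) + b * (a / s) - c * (b / s) * (a / s)) :=
    mul_le_mul_of_nonneg_left hdle hc.le
  have hrew : c * (a * (b / s) + b * (a / s) - c * (b / s) * (a / s))
      = a * b * (2 * c * s - c ^ 2) / s ^ 2 := by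
    field_simp; ring
  have h2 : a * b * (2 * c * s - c ^ 2) / s ^ 2 ≤ a * b := by
    rw [div_le_iff₀ (by positivity)]
    nlinarith [sq_nonneg (s - c), mul_pos ha hb]
  have key : c * d ≤ a * b := by rw [hrew] at h1; linarith
  refine ⟨key, fun heq => ?_⟩
  have hcx : a * b * (2 * c * s - c ^ 2) / s ^ 2 = a * b := by
    rw [hrew] at h1; linarith
  field_simp at hcx
  have hsc : (s - c) ^ 2 ≤ 0 := by nlinarith
  have hsc' : s = c := by nlinarith [sq_nonneg (s - c)]
  refine ⟨hsc'.symm, ?_⟩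
  rw [hsc', eq_div_iff hc.ne']
  linarith
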